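/- Let (S, n) ⊆ (R, m) be a module-finite extension of local rings with dim S = dim R = d, and let M be a finitely generated R-module with dim M = d. If M is i-effaceable as an R-module for all i < k, then M is i-effaceable as an S-module for all i < k. -/

import Mathlib

/-- Koszul cochains: `C^i = ((i-subsets of Fin d) → M)`. -/
abbrev KoszulCochain (d : ℕ) (M : Type*) (i : ℕ) : Type _ :=
  {S : Finset (Fin d) // S.card = i} → M

/-- The Koszul differential into degree `i` (from degree `i-1`). -/
noncomputable def koszulDiff {R : Type*} [CommRing R] {d : ℕ} (f : Fin d → R)
    (M : Type*) [AddCommGroup M] [Module R M] (i : ℕ) :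
    KoszulCochain d M (i - 1) →ₗ[R] KoszulCochain d M i where
  toFun φ S := ∑ j ∈ S.1.attach,
    (((-1 : R) ^ ((S.1.filter (fun a => a < j.1)).card)) * f j.1) •
      φ ⟨S.1.erase j.1, by rw [Finset.card_erase_of_mem j.2, S.2]⟩
  map_add' φ ψ := by
    funext S
    simp [Finset.sum_add_distrib, smul_add]
  map_smul' r φ := by
    funext S
    simp only [Pi.smul_apply, RingHom.id_apply, smul_smul]
    rw [Finset.smul_sum]
    exact Finset.sum_congr rfl fun j _ => by rw [smul_smul, mul_comm]

/-- The `i`-th Koszul cohomology of `f : Fin d → R` on `M`: the kernel of the outgoing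
Koszul differential modulo (the pullback of) the range of the incoming one. -/
noncomputable abbrev koszulCohomology {R : Type*} [CommRing R] {d : ℕ} (f : Fin d → R)
    (M : Type*) [AddCommGroup M] [Module R M] (i : ℕ) : Type _ :=
  LinearMap.ker (koszulDiff f M (i + 1)) ⧸
    Submodule.comap (LinearMap.ker (koszulDiff f M (i + 1))).subtype
      (LinearMap.range (koszulDiff f M i))

/-- The length of a module, as the Krull dimension of its lattice of submodules. -/
noncomputable def mLength (R M : Type*) [CommRing R] [AddCommGroup M] [Module R M] :
    WithBot ℕ∞ :=
  Order.krullDim (Submodule R M)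

/-- The length of a module, as a natural number (intended for finite-length modules). -/
noncomputable def mLengthNat (R M : Type*) [CommRing R] [AddCommGroup M] [Module R M] : ℕ :=
  ((mLength R M).unbotD 0).untopD 0


open Order

section OrderLemmas

variable {α β : Type*} [PartialOrder α] [PartialOrder β]

lemma aux_withbot_eq_top {x : WithBot ℕ∞} (h : ∀ n : ℕ, ((n : ℕ∞) : WithBot ℕ∞) ≤ x) :
    x = ⊤ := by
  cases x with
  | bot => exact absurd (h 0) (by simp)
  | coe y =>
    cases y with
    | top => rfl
    | coe m => exact absurd (h (m+1)) (by
        simp only [WithBot.coe_le_coe, Nat.cast_le]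
        omega)

lemma aux_prod_chain (p : LTSeries (α × β)) :
    (p.length : ℕ∞) ≤ Order.height p.last.1 + Order.height p.last.2 := by
  suffices H : ∀ i : Fin (p.length + 1), (i.1 : ℕ∞) ≤ Order.height (p i).1 + Order.height (p i).2 by
    exact H (Fin.last p.length)
  intro i
  induction i using Fin.induction with
  | zero => simp
  | succ i ih =>
    have hlt : p i.castSucc < p i.succ := p.strictMono (Fin.castSucc_lt_succ (i := i))
    have key : Order.height (p i.castSucc).1 + Order.height (p i.castSucc).2 + 1 ≤
        Order.height (p i.succ).1 + Order.height (p i.succ).2 := by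
      rcases Prod.lt_iff.mp hlt with ⟨h1, h2⟩ | ⟨h1, h2⟩
      · have : Order.height (p i.castSucc).1 + 1 ≤ Order.height (p i.succ).1 := by
          rw [Order.height_eq_iSup_lt_height (p i.succ).1]
          exact le_iSup₂_of_le (p i.castSucc).1 h1 le_rfl
        calc Order.height (p i.castSucc).1 + Order.height (p i.castSucc).2 + 1
            = (Order.height (p i.castSucc).1 + 1) + Order.height (p i.castSucc).2 := by ring
          _ ≤ Order.height (p i.succ).1 + Order.height (p i.succ).2 :=
            add_le_add this (Order.height_mono h2)
      · have : Order.height (p i.castSucc).2 + 1 ≤ Order.height (p i.succ).2 := by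
          rw [Order.height_eq_iSup_lt_height (p i.succ).2]
          exact le_iSup₂_of_le (p i.castSucc).2 h2 le_rfl
        calc Order.height (p i.castSucc).1 + Order.height (p i.castSucc).2 + 1
            = Order.height (p i.castSucc).1 + (Order.height (p i.castSucc).2 + 1) := by ring
          _ ≤ Order.height (p i.succ).1 + Order.height (p i.succ).2 :=
            add_le_add (Order.height_mono h1) this
    calc ((i.succ : Fin (p.length+1)).1 : ℕ∞) = (i.1 : ℕ∞) + 1 := by
          simp [Fin.val_succ]
      _ ≤ Order.height (p i.castSucc).1 + Order.height (p i.castSucc).2 + 1 := add_le_add_left ih 1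
      _ ≤ _ := key

lemma krullDim_prod_le :
    krullDim (α × β) ≤ krullDim α + krullDim β := by
  rcases isEmpty_or_nonempty (α × β) with h | h
  · rw [krullDim_eq_bot_iff.mpr h]
    exact bot_le
  · have hα : Nonempty α := ⟨h.some.1⟩
    have hβ : Nonempty β := ⟨h.some.2⟩
    rw [krullDim_eq_iSup_length]
    rw [show ((↑(⨆ (p : LTSeries (α × β)), (p.length : ℕ∞)) : WithBot ℕ∞)) =
      ⨆ (p : LTSeries (α × β)), ((p.length : ℕ∞) : WithBot ℕ∞) from WithBot.coe_iSup (OrderTop.bddAbove _)]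
    apply iSup_le
    intro p
    calc ((p.length : ℕ∞) : WithBot ℕ∞) ≤
        ((Order.height p.last.1 + Order.height p.last.2 : ℕ∞) : WithBot ℕ∞) := by
          exact_mod_cast aux_prod_chain p
      _ = ((Order.height p.last.1 : ℕ∞) : WithBot ℕ∞) + ((Order.height p.last.2 : ℕ∞) : WithBot ℕ∞) := by
          exact_mod_cast rfl
      _ ≤ krullDim α + krullDim β :=
          add_le_add (Order.height_le_krullDim _) (Order.height_le_krullDim _)

/-- If the Krull dimension of an order is not `⊤`, the order is well-founded both ways. -/
lemma wellFoundedLT_of_krullDim_ne_top (h : krullDim α ≠ ⊤) : WellFoundedLT α := by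
  by_contra hwf
  apply h
  apply aux_withbot_eq_top
  intro n
  have : ¬ WellFounded ((· < ·) : α → α → Prop) := fun hw => hwf ⟨hw⟩
  rw [RelEmbedding.wellFounded_iff_isEmpty, not_isEmpty_iff] at this
  obtain ⟨f⟩ := this
  -- f : ((· > ·) : ℕ → ℕ → Prop) ↪r ((· < ·) : α → α → Prop)
  have hf : ∀ {a b : ℕ}, a > b → f a < f b := fun hab => f.map_rel_iff.mpr hab
  let p : LTSeries α := LTSeries.mk n (fun i => f (n - i.1)) (by
    intro i j hij
    apply hf
    omega)
  have := Order.LTSeries.length_le_krullDim p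
  exact this

lemma wellFoundedGT_of_krullDim_ne_top (h : krullDim α ≠ ⊤) : WellFoundedGT α := by
  by_contra hwf
  apply h
  apply aux_withbot_eq_top
  intro n
  have : ¬ WellFounded ((· > ·) : α → α → Prop) := fun hw => hwf ⟨hw⟩
  rw [RelEmbedding.wellFounded_iff_isEmpty, not_isEmpty_iff] at this
  obtain ⟨f⟩ := this
  have hf : ∀ {a b : ℕ}, a > b → f a > f b := fun hab => f.map_rel_iff.mpr hab
  let p : LTSeries α := LTSeries.mk n (fun i => f i.1) (by
    intro i j hij
    exact hf hij)
  have := Order.LTSeries.length_le_krullDim p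
  exact this

/-- realize finite Krull dimension lower bounds by chains -/
lemma exists_ltSeries_of_le_krullDim (n : ℕ) (h : ((n : ℕ∞) : WithBot ℕ∞) ≤ krullDim α) :
    ∃ p : LTSeries α, p.length = n := by
  have hne : Nonempty α := by
    by_contra he
    rw [not_nonempty_iff] at he
    rw [krullDim_eq_bot_iff.mpr he] at h
    simp at h
  cases n with
  | zero => exact ⟨RelSeries.singleton _ (Classical.arbitrary α), rfl⟩
  | succ m =>
    rw [krullDim_eq_iSup_length, WithBot.coe_le_coe] at h
    have : (m : ℕ∞) < ⨆ (p : LTSeries α), (p.length : ℕ∞) := lt_of_lt_of_le (by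
      exact_mod_cast Nat.lt_succ_self m) h
    rw [lt_iSup_iff] at this
    obtain ⟨p, hp⟩ := this
    have hp' : m + 1 ≤ p.length := by exact_mod_cast hp
    refine ⟨p.take ⟨m + 1, by omega⟩, ?_⟩
    simp [RelSeries.take]

/-- Krull dimension of a simple order is 1. -/
lemma krullDim_eq_one_of_isSimpleOrder [BoundedOrder α] [IsSimpleOrder α] :
    krullDim α = 1 := by
  apply le_antisymm
  · rw [krullDim_eq_iSup_length]
    rw [show ((1 : WithBot ℕ∞)) = ((1 : ℕ∞) : WithBot ℕ∞) from rfl, WithBot.coe_le_coe]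
    apply iSup_le
    intro p
    by_contra hlen
    push_neg at hlen
    have h2 : 2 ≤ p.length := by
      by_contra h2
      push_neg at h2
      interval_cases h : p.length <;> simp_all <;> exact hlen (by exact_mod_cast by omega)
    have h01 : p ⟨0, by omega⟩ < p ⟨1, by omega⟩ := p.strictMono (by simp [Fin.lt_def])
    have h12 : p ⟨1, by omega⟩ < p ⟨2, by omega⟩ := p.strictMono (by simp [Fin.lt_def])
    rcases IsSimpleOrder.eq_bot_or_eq_top (p ⟨1, by omega⟩) with h | h
    · rw [h] at h01; exact absurd h01 (by simp)
    · rw [h] at h12; exact absurd h12 (by simp)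
  · have : (⊥ : α) < ⊤ := bot_lt_top
    let p : LTSeries α := LTSeries.mk 1 (fun i => if i.1 = 0 then ⊥ else ⊤) (by
      intro i j hij
      have : i.1 < j.1 := hij
      fin_cases i <;> fin_cases j <;> simp_all)
    have h1 := Order.LTSeries.length_le_krullDim p
    simpa [p] using h1

end OrderLemmas

section MLength

variable {R M N : Type*} [CommRing R] [AddCommGroup M] [Module R M] [AddCommGroup N] [Module R N]

lemma mLength_ne_bot (R M : Type*) [CommRing R] [AddCommGroup M] [Module R M] :
    mLength R M ≠ ⊥ := by
  have : (0 : WithBot ℕ∞) ≤ mLength R M := Order.krullDim_nonneg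
  intro h
  rw [h] at this
  simp at this

lemma mLength_eq_zero_of_subsingleton [Subsingleton M] : mLength R M = 0 := by
  have : Unique (Submodule R M) := ⟨⟨⊥⟩, fun a => by
    ext x
    simp [Subsingleton.elim x 0]⟩
  exact Order.krullDim_eq_zero_of_unique

lemma mLength_congr (e : M ≃ₗ[R] N) : mLength R M = mLength R N :=
  Order.krullDim_eq_of_orderIso (Submodule.orderIsoMapComap e)

lemma mLength_le_of_surjective (f : M →ₗ[R] N) (hf : Function.Surjective f) :
    mLength R N ≤ mLength R M := by
  apply Order.krullDim_le_of_strictMono (Submodule.comap f)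
  have hmono : Monotone (Submodule.comap f) := fun _ _ hab => Submodule.comap_mono hab
  exact hmono.strictMono_of_injective (Submodule.comap_injective_of_surjective hf)

lemma mLength_restrict_le (S : Type*) [CommRing S] [Algebra S R] [Module S M]
    [IsScalarTower S R M] : mLength R M ≤ mLength S M := by
  apply Order.krullDim_le_of_strictMono (Submodule.restrictScalars S : Submodule R M → Submodule S M)
  have hmono : Monotone (Submodule.restrictScalars S : Submodule R M → Submodule S M) :=
    fun _ _ h => h
  exact hmono.strictMono_of_injective (Submodule.restrictScalars_injective S R M)

lemma one_le_mLength_of_nontrivial [Nontrivial M] : (1 : WithBot ℕ∞) ≤ mLength R M := by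
  let p : LTSeries (Submodule R M) := LTSeries.mk 1
    (fun i => if i.1 = 0 then ⊥ else ⊤) (by
      intro i j hij
      have : i.1 < j.1 := hij
      have hbt : (⊥ : Submodule R M) < ⊤ := bot_lt_top
      fin_cases i <;> fin_cases j <;> simp_all)
  have h1 := Order.LTSeries.length_le_krullDim p
  simpa [p, mLength] using h1

lemma mLength_eq_one_of_isSimpleModule (h : IsSimpleModule R M) : mLength R M = 1 :=
  krullDim_eq_one_of_isSimpleOrder

/-- Subadditivity: `ℓ(M) ≤ ℓ(T) + ℓ(M/T)`. -/
lemma mLength_le_add (T : Submodule R M) :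
    mLength R M ≤ mLength R T + mLength R (M ⧸ T) := by
  have hsm : StrictMono (fun x : Submodule R M =>
      ((Submodule.comap T.subtype x, Submodule.map T.mkQ x) :
        Submodule R T × Submodule R (M ⧸ T))) := by
    intro x y hxy
    refine lt_of_le_of_ne ⟨Submodule.comap_mono hxy.le, Submodule.map_mono hxy.le⟩ ?_
    intro heq
    have h1 : Submodule.comap T.subtype x = Submodule.comap T.subtype y := congrArg Prod.fst heq
    have h2 : Submodule.map T.mkQ x = Submodule.map T.mkQ y := congrArg Prod.snd heq
    have hyx : y ≤ x := by
      intro m hm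
      have : T.mkQ m ∈ Submodule.map T.mkQ x := h2 ▸ Submodule.mem_map_of_mem hm
      obtain ⟨z, hz, hzm⟩ := this
      have hmz : m - z ∈ T := (Submodule.Quotient.eq T).mp (by
        simpa [Submodule.mkQ_apply] using hzm.symm)
      have hmem : (⟨m - z, hmz⟩ : T) ∈ Submodule.comap T.subtype y := by
        simpa using Submodule.sub_mem y hm (hxy.le hz)
      rw [← h1] at hmem
      have hx : m - z ∈ x := hmem
      simpa using Submodule.add_mem x hz hx
    exact hxy.ne (le_antisymm hxy.le hyx)
  calc mLength R M ≤ Order.krullDim (Submodule R T × Submodule R (M ⧸ T)) :=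
        Order.krullDim_le_of_strictMono _ hsm
    _ ≤ _ := krullDim_prod_le

/-- Strict drop: quotienting by a nonzero submodule drops the length. -/
lemma mLength_quotient_add_one_le (T : Submodule R M) (hT : T ≠ ⊥) :
    mLength R (M ⧸ T) + 1 ≤ mLength R M := by
  rcases eq_or_ne (mLength R (M ⧸ T)) ⊤ with h | h
  · have : mLength R (M ⧸ T) ≤ mLength R M :=
      mLength_le_of_surjective (T.mkQ) (Submodule.mkQ_surjective T)
    rw [h] at this ⊢
    rw [top_le_iff.mp this]
    simp
  · have hb := mLength_ne_bot R (M ⧸ T)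
    obtain ⟨y, hy⟩ := WithBot.ne_bot_iff_exists.mp hb
    cases y with
    | top => exact absurd hy.symm h
    | coe n =>
      -- realize a chain of length n in M ⧸ T
      obtain ⟨p, hp⟩ := exists_ltSeries_of_le_krullDim (α := Submodule R (M ⧸ T)) n hy.le
      -- map it to M and prepend ⊥
      have hcmono : Monotone (Submodule.comap T.mkQ : Submodule R (M ⧸ T) → Submodule R M) :=
        fun _ _ hab => Submodule.comap_mono hab
      have hcm : StrictMono (Submodule.comap T.mkQ : Submodule R (M ⧸ T) → Submodule R M) :=
        hcmono.strictMono_of_injective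
          (Submodule.comap_injective_of_surjective (Submodule.mkQ_surjective T))
      let q := (p.map _ hcm).cons ⊥ (by
        apply lt_of_lt_of_le (bot_lt_iff_ne_bot.mpr hT)
        show T ≤ (p.map _ hcm).head
        calc T = Submodule.comap T.mkQ ⊥ := by
              rw [Submodule.comap_bot, Submodule.ker_mkQ]
          _ ≤ Submodule.comap T.mkQ p.head := Submodule.comap_mono bot_le
          _ = (p.map _ hcm).head := rfl)
      have hq := Order.LTSeries.length_le_krullDim q
      have hql : q.length = n + 1 := by
        simp [q, hp]
      rw [hql] at hq
      rw [← hy]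
      calc ((n : ℕ∞) : WithBot ℕ∞) + 1 = (((n+1 : ℕ) : ℕ∞) : WithBot ℕ∞) := by
            push_cast; rfl
        _ ≤ mLength R M := hq

end MLength

section Helpers

/-- If `mLengthNat`-style extraction is nonzero, recover the value. -/
lemma withbot_cases (x : WithBot ℕ∞) :
    x = ⊥ ∨ x = ⊤ ∨ ∃ k : ℕ, x = ((k : ℕ∞) : WithBot ℕ∞) := by
  cases x with
  | bot => exact Or.inl rfl
  | coe y =>
    cases y with
    | top => exact Or.inr (Or.inl rfl)
    | coe m => exact Or.inr (Or.inr ⟨m, rfl⟩)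

lemma unbot_untop_of_eq (x : WithBot ℕ∞) (k : ℕ) (h : x = ((k : ℕ∞) : WithBot ℕ∞)) :
    (x.unbotD 0).untopD 0 = k := by
  subst h; rfl

lemma eq_coe_of_unbot_untop_ne_zero {x : WithBot ℕ∞} (h : (x.unbotD 0).untopD 0 ≠ 0) :
    x = ((((x.unbotD 0).untopD 0 : ℕ) : ℕ∞) : WithBot ℕ∞) := by
  rcases withbot_cases x with rfl | rfl | ⟨k, rfl⟩
  · exact absurd rfl h
  · exact absurd rfl h
  · rw [unbot_untop_of_eq _ k rfl]

lemma exists_nat_of_le_coe {x : WithBot ℕ∞} (hb : x ≠ ⊥) {n : ℕ}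
    (h : x ≤ ((n : ℕ∞) : WithBot ℕ∞)) :
    ∃ k : ℕ, k ≤ n ∧ x = ((k : ℕ∞) : WithBot ℕ∞) := by
  rcases withbot_cases x with rfl | rfl | ⟨k, rfl⟩
  · exact absurd rfl hb
  · exact absurd h (by rw [← WithBot.coe_top, WithBot.coe_le_coe, top_le_iff]; exact ENat.coe_ne_top _)
  · exact ⟨k, by exact_mod_cast h, rfl⟩

end Helpers

section SimpleClassify

variable {R : Type*} [CommRing R] [IsLocalRing R]

lemma simple_equiv_quot_maximal (T : Type*) [AddCommGroup T] [Module R T]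
    (h : IsSimpleModule R T) : Nonempty (T ≃ₗ[R] (R ⧸ IsLocalRing.maximalIdeal R)) := by
  have : IsSimpleModule R T := h
  have hnt : Nontrivial T := by
    by_contra hsub
    rw [not_nontrivial_iff_subsingleton] at hsub
    have : (⊥ : Submodule R T) = ⊤ := Subsingleton.elim _ _
    exact (IsSimpleOrder.bot_ne_top (α := Submodule R T)) this
  obtain ⟨t, ht⟩ := exists_ne (0 : T)
  set f := LinearMap.toSpanSingleton R T t with hf
  have hrange : LinearMap.range f = ⊤ := by
    rw [← LinearMap.span_singleton_eq_range]
    rcases (IsSimpleOrder.eq_bot_or_eq_top (Submodule.span R {t})) with hsp | hsp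
    · exact absurd (Submodule.span_singleton_eq_bot.mp hsp) ht
    · exact hsp
  have hsurj : Function.Surjective f := LinearMap.range_eq_top.mp hrange
  let e1 : (R ⧸ LinearMap.ker f) ≃ₗ[R] T := f.quotKerEquivOfSurjective hsurj
  have hsimp : IsSimpleModule R (R ⧸ LinearMap.ker f) := IsSimpleModule.congr e1
  have hco : IsCoatom (LinearMap.ker f) := isSimpleModule_iff_isCoatom.mp hsimp
  have hmax : Ideal.IsMaximal (LinearMap.ker f) := Ideal.isMaximal_def.mpr hco
  have heq : LinearMap.ker f = IsLocalRing.maximalIdeal R := IsLocalRing.eq_maximalIdeal hmax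
  exact ⟨e1.symm.trans (Submodule.quotEquivOfEq _ _ heq)⟩

end SimpleClassify

section D3

variable {S : Type*} [CommRing S]

lemma mLength_le_of_gen_annihilated (I : Ideal S) (b : ℕ)
    (hb : mLength S (S ⧸ I) ≤ ((b : ℕ∞) : WithBot ℕ∞)) :
    ∀ (t : ℕ) (Q : Type) [AddCommGroup Q] [Module S Q],
      (∃ v : Fin t → Q, Submodule.span S (Set.range v) = ⊤) →
      (∀ x ∈ I, ∀ q : Q, x • q = 0) →
      mLength S Q ≤ (((t * b : ℕ) : ℕ∞) : WithBot ℕ∞) := by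
  intro t
  induction t with
  | zero =>
    intro Q _ _ hgen _
    obtain ⟨v, hv⟩ := hgen
    have hrange : Set.range v = ∅ := Set.range_eq_empty v
    rw [hrange, Submodule.span_empty] at hv
    have hsub : Subsingleton Q := by
      constructor
      intro a b
      have ha : a ∈ (⊥ : Submodule S Q) := hv ▸ Submodule.mem_top
      have hbb : b ∈ (⊥ : Submodule S Q) := hv ▸ Submodule.mem_top
      rw [Submodule.mem_bot] at ha hbb
      rw [ha, hbb]
    rw [mLength_eq_zero_of_subsingleton]
    simp
  | succ n ih =>
    intro Q _ _ hgen hann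
    obtain ⟨v, hv⟩ := hgen
    set T := Submodule.span S {v 0} with hTdef
    -- length of T is at most b
    have hT : mLength S T ≤ ((b : ℕ∞) : WithBot ℕ∞) := by
      set f := LinearMap.toSpanSingleton S Q (v 0) with hfdef
      have hTr : T = LinearMap.range f := LinearMap.span_singleton_eq_range S Q (v 0)
      have hIk : I ≤ LinearMap.ker f := by
        intro x hx
        rw [LinearMap.mem_ker]
        exact hann x hx (v 0)
      have e : (S ⧸ LinearMap.ker f) ≃ₗ[S] T := by
        rw [hTr]
        exact f.quotKerEquivRange
      have hsurj : Function.Surjective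
          (Submodule.mapQ I (LinearMap.ker f) LinearMap.id (by simpa using hIk)) := by
        intro z
        obtain ⟨s, rfl⟩ := Submodule.Quotient.mk_surjective _ z
        exact ⟨Submodule.Quotient.mk s, by rw [Submodule.mapQ_apply]; rfl⟩
      calc mLength S T = mLength S (S ⧸ LinearMap.ker f) := (mLength_congr e).symm
        _ ≤ mLength S (S ⧸ I) := mLength_le_of_surjective _ hsurj
        _ ≤ _ := hb
    -- the quotient is generated by n elements
    have hgen' : ∃ v' : Fin n → (Q ⧸ T), Submodule.span S (Set.range v') = ⊤ := by
      refine ⟨fun i => T.mkQ (v i.succ), ?_⟩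
      have hmem : ∀ j : Fin (n+1), T.mkQ (v j) ∈
          Submodule.span S (Set.range (fun i : Fin n => T.mkQ (v i.succ))) := by
        intro j
        induction j using Fin.cases with
        | zero =>
          have : v 0 ∈ T := Submodule.mem_span_singleton_self _
          have : T.mkQ (v 0) = 0 := by
            rw [Submodule.mkQ_apply, Submodule.Quotient.mk_eq_zero]
            exact this
          rw [this]
          exact Submodule.zero_mem _
        | succ i => exact Submodule.subset_span ⟨i, rfl⟩
      apply le_antisymm le_top
      have h1 : Submodule.map T.mkQ (Submodule.span S (Set.range v)) ≤
          Submodule.span S (Set.range (fun i : Fin n => T.mkQ (v i.succ))) := by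
        rw [Submodule.map_span]
        apply Submodule.span_le.mpr
        rintro _ ⟨_, ⟨j, rfl⟩, rfl⟩
        exact hmem j
      calc (⊤ : Submodule S (Q ⧸ T)) = Submodule.map T.mkQ ⊤ := by
            rw [Submodule.map_top, Submodule.range_mkQ]
        _ = Submodule.map T.mkQ (Submodule.span S (Set.range v)) := by rw [hv]
        _ ≤ _ := h1
    have hann' : ∀ x ∈ I, ∀ q : (Q ⧸ T), x • q = 0 := by
      intro x hx q
      obtain ⟨q₀, rfl⟩ := Submodule.Quotient.mk_surjective _ q
      rw [← Submodule.Quotient.mk_smul, hann x hx, Submodule.Quotient.mk_zero]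
    calc mLength S Q ≤ mLength S T + mLength S (Q ⧸ T) := mLength_le_add T
      _ ≤ ((b : ℕ∞) : WithBot ℕ∞) + (((n * b : ℕ) : ℕ∞) : WithBot ℕ∞) :=
          add_le_add hT (ih (Q ⧸ T) hgen' hann')
      _ = (((n + 1) * b : ℕ) : ℕ∞) := by
          rw [← WithBot.coe_add, ← Nat.cast_add]
          congr 2
          ring
end D3

section FLemma

variable {R : Type*} [CommRing R]

/-- A Noetherian and Artinian module has finite `mLength`. -/
lemma mLength_finite_of_finiteLength (N : Type*) [AddCommGroup N] [Module R N]
    [IsNoetherian R N] [IsArtinian R N] :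
    ∃ A : ℕ, mLength R N = ((A : ℕ∞) : WithBot ℕ∞) := by
  have wf : WellFounded ((· > ·) : Submodule R N → Submodule R N → Prop) :=
    (inferInstance : WellFoundedGT (Submodule R N)).wf
  have key : ∀ x : Submodule R N, ∃ A : ℕ, mLength R (N ⧸ x) ≤ ((A : ℕ∞) : WithBot ℕ∞) := by
    intro x
    induction x using WellFounded.induction wf with
    | _ x IH =>
    by_cases hbt : (⊥ : Submodule R (N ⧸ x)) = ⊤
    · refine ⟨0, ?_⟩
      have hsub : Subsingleton (N ⧸ x) := by
        constructor
        intro a b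
        have ha : a ∈ (⊥ : Submodule R (N ⧸ x)) := hbt ▸ Submodule.mem_top
        have hbb : b ∈ (⊥ : Submodule R (N ⧸ x)) := hbt ▸ Submodule.mem_top
        rw [Submodule.mem_bot] at ha hbb
        rw [ha, hbb]
      rw [mLength_eq_zero_of_subsingleton]
      simp
    · obtain ⟨A₀, hatom, -⟩ :=
        (eq_bot_or_exists_atom_le (⊤ : Submodule R (N ⧸ x))).resolve_left (fun h => hbt h.symm)
      set y := Submodule.comap x.mkQ A₀ with hydef
      have hxy : x < y := by
        rw [lt_iff_le_and_ne]
        constructor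
        · calc x = Submodule.comap x.mkQ ⊥ := by rw [Submodule.comap_bot, Submodule.ker_mkQ]
            _ ≤ y := Submodule.comap_mono bot_le
        · intro hxeq
          apply hatom.1
          have hmap : Submodule.map x.mkQ y = A₀ :=
            Submodule.map_comap_eq_of_surjective (Submodule.mkQ_surjective x) A₀
          rw [← hmap, ← hxeq]
          apply le_antisymm _ bot_le
          intro z hz
          obtain ⟨m, hm, rfl⟩ := hz
          rw [Submodule.mem_bot, Submodule.mkQ_apply, Submodule.Quotient.mk_eq_zero]
          exact hm
      obtain ⟨Ay, hAy⟩ := IH y hxy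
      have hmap : Submodule.map x.mkQ y = A₀ :=
        Submodule.map_comap_eq_of_surjective (Submodule.mkQ_surjective x) A₀
      let e : ((N ⧸ x) ⧸ A₀) ≃ₗ[R] (N ⧸ y) :=
        (Submodule.quotEquivOfEq _ _ hmap.symm).trans
          (Submodule.quotientQuotientEquivQuotient x y hxy.le)
      have hsimple : IsSimpleModule R A₀ := isSimpleModule_iff_isAtom.mpr hatom
      refine ⟨Ay + 1, ?_⟩
      calc mLength R (N ⧸ x) ≤ mLength R A₀ + mLength R ((N ⧸ x) ⧸ A₀) := mLength_le_add A₀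
        _ = 1 + mLength R (N ⧸ y) := by
            rw [mLength_eq_one_of_isSimpleModule hsimple, mLength_congr e]
        _ ≤ 1 + ((Ay : ℕ∞) : WithBot ℕ∞) := add_le_add le_rfl hAy
        _ = (((Ay + 1 : ℕ) : ℕ∞) : WithBot ℕ∞) := by
            rw [show (1 : WithBot ℕ∞) = (((1:ℕ) : ℕ∞) : WithBot ℕ∞) from rfl,
              ← WithBot.coe_add, ← Nat.cast_add, Nat.add_comm]
  obtain ⟨A, hA⟩ := key ⊥
  have e : (N ⧸ (⊥ : Submodule R N)) ≃ₗ[R] N := Submodule.quotEquivOfEqBot _ rfl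
  rw [mLength_congr e] at hA
  obtain ⟨k, -, hk⟩ := exists_nat_of_le_coe (mLength_ne_bot R N) hA
  exact ⟨k, hk⟩

end FLemma

lemma wbcoe_add (p q : ℕ) :
    (((p + q : ℕ) : ℕ∞) : WithBot ℕ∞) = ((p : ℕ∞) : WithBot ℕ∞) + ((q : ℕ∞) : WithBot ℕ∞) := by
  rw [← WithBot.coe_add, ← Nat.cast_add]

section E1

variable {S R : Type*} [CommRing S] [CommRing R] [Algebra S R]

/-- The quotient by a restricted-scalars submodule is `S`-equivalent to the quotient. -/
noncomputable def quotRestrictScalarsEquiv (P : Type*) [AddCommGroup P] [Module R P]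
    [Module S P] [IsScalarTower S R P] (A : Submodule R P) :
    (P ⧸ (A.restrictScalars S)) ≃ₗ[S] (P ⧸ A) := by
  have hker : LinearMap.ker (A.mkQ.restrictScalars S) = A.restrictScalars S := by
    ext z
    simp [LinearMap.mem_ker, Submodule.mkQ_apply, Submodule.Quotient.mk_eq_zero]
  exact (Submodule.quotEquivOfEq _ _ hker.symm).trans
    ((A.mkQ.restrictScalars S).quotKerEquivOfSurjective
      (fun z => Submodule.Quotient.mk_surjective _ z))

end E1

section CLemma

variable (S R : Type*) [CommRing S] [CommRing R] [Algebra S R] [IsLocalRing R]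

lemma length_restrict_le (c1 : ℕ)
    (hc1 : mLength S (R ⧸ IsLocalRing.maximalIdeal R) ≤ ((c1 : ℕ∞) : WithBot ℕ∞))
    (N : Type*) [AddCommGroup N] [Module R N] [Module S N] [IsScalarTower S R N]
    [IsNoetherian R N] [IsArtinian R N] :
    ∃ A : ℕ, mLength R N = ((A : ℕ∞) : WithBot ℕ∞) ∧
      mLength S N ≤ (((c1 * A : ℕ) : ℕ∞) : WithBot ℕ∞) := by
  have wf : WellFounded ((· > ·) : Submodule R N → Submodule R N → Prop) :=
    (inferInstance : WellFoundedGT (Submodule R N)).wf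
  have key : ∀ x : Submodule R N, ∃ A : ℕ,
      mLength R (N ⧸ x) = ((A : ℕ∞) : WithBot ℕ∞) ∧
      mLength S (N ⧸ x) ≤ (((c1 * A : ℕ) : ℕ∞) : WithBot ℕ∞) := by
    intro x
    induction x using WellFounded.induction wf with
    | _ x IH =>
    by_cases hbt : (⊥ : Submodule R (N ⧸ x)) = ⊤
    · refine ⟨0, ?_, ?_⟩
      · have hsub : Subsingleton (N ⧸ x) := by
          constructor
          intro a b
          have ha : a ∈ (⊥ : Submodule R (N ⧸ x)) := hbt ▸ Submodule.mem_top
          have hbb : b ∈ (⊥ : Submodule R (N ⧸ x)) := hbt ▸ Submodule.mem_top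
          rw [Submodule.mem_bot] at ha hbb
          rw [ha, hbb]
        rw [mLength_eq_zero_of_subsingleton]
        simp
      · have hsub : Subsingleton (N ⧸ x) := by
          constructor
          intro a b
          have ha : a ∈ (⊥ : Submodule R (N ⧸ x)) := hbt ▸ Submodule.mem_top
          have hbb : b ∈ (⊥ : Submodule R (N ⧸ x)) := hbt ▸ Submodule.mem_top
          rw [Submodule.mem_bot] at ha hbb
          rw [ha, hbb]
        rw [mLength_eq_zero_of_subsingleton]
        simp
    · obtain ⟨A₀, hatom, -⟩ :=
        (eq_bot_or_exists_atom_le (⊤ : Submodule R (N ⧸ x))).resolve_left (fun h => hbt h.symm)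
      set y := Submodule.comap x.mkQ A₀ with hydef
      have hxy : x < y := by
        rw [lt_iff_le_and_ne]
        constructor
        · calc x = Submodule.comap x.mkQ ⊥ := by rw [Submodule.comap_bot, Submodule.ker_mkQ]
            _ ≤ y := Submodule.comap_mono bot_le
        · intro hxeq
          apply hatom.1
          have hmap : Submodule.map x.mkQ y = A₀ :=
            Submodule.map_comap_eq_of_surjective (Submodule.mkQ_surjective x) A₀
          rw [← hmap, ← hxeq]
          apply le_antisymm _ bot_le
          intro z hz
          obtain ⟨m, hm, rfl⟩ := hz
          rw [Submodule.mem_bot, Submodule.mkQ_apply, Submodule.Quotient.mk_eq_zero]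
          exact hm
      obtain ⟨Ay, hRy, hSy⟩ := IH y hxy
      have hmap : Submodule.map x.mkQ y = A₀ :=
        Submodule.map_comap_eq_of_surjective (Submodule.mkQ_surjective x) A₀
      let e : ((N ⧸ x) ⧸ A₀) ≃ₗ[R] (N ⧸ y) :=
        (Submodule.quotEquivOfEq _ _ hmap.symm).trans
          (Submodule.quotientQuotientEquivQuotient x y hxy.le)
      have hsimple : IsSimpleModule R A₀ := isSimpleModule_iff_isAtom.mpr hatom
      refine ⟨Ay + 1, ?_, ?_⟩
      · -- exact R-length
        apply le_antisymm
        · calc mLength R (N ⧸ x) ≤ mLength R A₀ + mLength R ((N ⧸ x) ⧸ A₀) := mLength_le_add A₀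
            _ = 1 + ((Ay : ℕ∞) : WithBot ℕ∞) := by
                rw [mLength_eq_one_of_isSimpleModule hsimple, mLength_congr e, hRy]
            _ = (((Ay + 1 : ℕ) : ℕ∞) : WithBot ℕ∞) := by
                rw [wbcoe_add, add_comm]; rfl
        · have := mLength_quotient_add_one_le A₀ hatom.1
          rw [mLength_congr e, hRy] at this
          calc (((Ay + 1 : ℕ) : ℕ∞) : WithBot ℕ∞)
              = ((Ay : ℕ∞) : WithBot ℕ∞) + 1 := by rw [wbcoe_add]; rfl
            _ ≤ mLength R (N ⧸ x) := this
      · -- S-length bound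
        obtain ⟨eT⟩ := simple_equiv_quot_maximal (R := R) A₀ hsimple
        have hA0 : mLength S A₀ ≤ ((c1 : ℕ∞) : WithBot ℕ∞) := by
          rw [mLength_congr (eT.restrictScalars S)]
          exact hc1
        have hrs : mLength S (A₀.restrictScalars S) = mLength S A₀ :=
          mLength_congr ((Submodule.restrictScalarsEquiv S (p := A₀)).restrictScalars S)
        have hquot : mLength S ((N ⧸ x) ⧸ (A₀.restrictScalars S)) = mLength S (N ⧸ y) := by
          rw [mLength_congr (quotRestrictScalarsEquiv (N ⧸ x) A₀),
            mLength_congr (e.restrictScalars S)]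
        calc mLength S (N ⧸ x)
            ≤ mLength S (A₀.restrictScalars S) +
              mLength S ((N ⧸ x) ⧸ (A₀.restrictScalars S)) := mLength_le_add _
          _ ≤ ((c1 : ℕ∞) : WithBot ℕ∞) + (((c1 * Ay : ℕ) : ℕ∞) : WithBot ℕ∞) := by
              rw [hrs, hquot]
              exact add_le_add hA0 hSy
          _ = (((c1 * (Ay + 1) : ℕ) : ℕ∞) : WithBot ℕ∞) := by
              rw [← wbcoe_add]
              congr 2
              ring
  obtain ⟨A, hA1, hA2⟩ := key ⊥
  have e : (N ⧸ (⊥ : Submodule R N)) ≃ₗ[R] N := Submodule.quotEquivOfEqBot _ rfl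
  rw [mLength_congr e] at hA1
  rw [mLength_congr (e.restrictScalars S)] at hA2
  exact ⟨A, hA1, hA2⟩

end CLemma

section KoszulCompare

variable {S R : Type*} [CommRing S] [CommRing R] [Algebra S R]
variable {M : Type*} [AddCommGroup M] [Module R M] [Module S M] [IsScalarTower S R M]
variable {d : ℕ}

lemma koszulDiff_compat (f : Fin d → S) (i : ℕ) (φ : KoszulCochain d M (i - 1)) :
    koszulDiff f M i φ = koszulDiff (fun j => algebraMap S R (f j)) M i φ := by
  funext X
  simp only [koszulDiff, LinearMap.coe_mk, AddHom.coe_mk]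
  apply Finset.sum_congr rfl
  intro j _
  have hcoef : ((-1 : R) ^ ((X.1.filter (fun a => a < j.1)).card)) * algebraMap S R (f j.1) =
      algebraMap S R (((-1 : S) ^ ((X.1.filter (fun a => a < j.1)).card)) * f j.1) := by
    rw [map_mul, map_pow, map_neg, map_one]
  rw [hcoef, algebraMap_smul]

/-- Koszul cohomology over `S` is `S`-linearly equivalent to the Koszul cohomology of the
image sequence over `R`. -/
noncomputable def koszulCohomologyEquiv (f : Fin d → S) (i : ℕ) :
    koszulCohomology f M i ≃ₗ[S]
      koszulCohomology (fun j => algebraMap S R (f j)) M i := by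
  set G : Fin d → R := fun j => algebraMap S R (f j) with hG
  -- inclusion of kernels
  let j0 : (LinearMap.ker (koszulDiff f M (i + 1))) →ₗ[S]
      (LinearMap.ker (koszulDiff G M (i + 1))) :=
    { toFun := fun x => ⟨x.1, by
        rw [LinearMap.mem_ker, ← koszulDiff_compat f (i+1) x.1]
        exact x.2⟩
      map_add' := fun a b => rfl
      map_smul' := fun s a => rfl }
  let q : Submodule R (LinearMap.ker (koszulDiff G M (i + 1))) :=
    Submodule.comap (LinearMap.ker (koszulDiff G M (i + 1))).subtype
      (LinearMap.range (koszulDiff G M i))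
  let π : (LinearMap.ker (koszulDiff G M (i + 1))) →ₗ[S] koszulCohomology G M i :=
    q.mkQ.restrictScalars S
  let fm : (LinearMap.ker (koszulDiff f M (i + 1))) →ₗ[S] koszulCohomology G M i := π.comp j0
  have hsurj : Function.Surjective fm := by
    intro z
    obtain ⟨⟨w, hw⟩, rfl⟩ := Submodule.Quotient.mk_surjective _ z
    have hw' : w ∈ LinearMap.ker (koszulDiff f M (i + 1)) := by
      rw [LinearMap.mem_ker, koszulDiff_compat (R := R) f (i+1) w]
      exact hw
    exact ⟨⟨w, hw'⟩, rfl⟩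
  have hker : LinearMap.ker fm =
      Submodule.comap (LinearMap.ker (koszulDiff f M (i + 1))).subtype
        (LinearMap.range (koszulDiff f M i)) := by
    ext x
    have hmkz : x ∈ LinearMap.ker fm ↔ j0 x ∈ q := by
      rw [LinearMap.mem_ker]
      show Submodule.Quotient.mk (j0 x) = (0 : koszulCohomology G M i) ↔ _
      rw [Submodule.Quotient.mk_eq_zero]
    rw [hmkz]
    show (j0 x).1 ∈ LinearMap.range (koszulDiff G M i) ↔
      x.1 ∈ LinearMap.range (koszulDiff f M i)
    constructor
    · rintro ⟨φ, hφ⟩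
      exact ⟨φ, by rw [koszulDiff_compat (R := R) f i φ]; exact hφ⟩
    · rintro ⟨φ, hφ⟩
      exact ⟨φ, by rw [← koszulDiff_compat (R := R) f i φ]; exact hφ⟩
  exact (Submodule.quotEquivOfEq _ _ hker.symm).trans (fm.quotKerEquivOfSurjective hsurj)

end KoszulCompare

section Carrier

variable {S R : Type*} [CommRing S] [CommRing R] [Algebra S R]
variable {M : Type*} [AddCommGroup M] [Module R M] [Module S M] [IsScalarTower S R M]

lemma map_smul_top_restrict (I : Ideal S) :
    (Ideal.map (algebraMap S R) I • (⊤ : Submodule R M)).restrictScalars S =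
      (I • (⊤ : Submodule S M)) := by
  apply le_antisymm
  · have hgen : ∀ r ∈ Ideal.span ((algebraMap S R) '' (I : Set S)), ∀ m : M,
        r • m ∈ (I • (⊤ : Submodule S M)) := by
      intro r hr
      induction hr using Submodule.span_induction with
      | mem w hw =>
        obtain ⟨x, hx, rfl⟩ := hw
        intro m
        rw [algebraMap_smul]
        exact Submodule.smul_mem_smul hx Submodule.mem_top
      | zero => intro m; rw [zero_smul]; exact Submodule.zero_mem _
      | add u w _ _ hu hw => intro m; rw [add_smul]; exact Submodule.add_mem _ (hu m) (hw m)
      | smul r' u _ hu =>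
        intro m
        rw [smul_eq_mul, mul_comm, mul_smul]
        exact hu (r' • m)
    intro z hz
    have hz' : z ∈ Ideal.map (algebraMap S R) I • (⊤ : Submodule R M) := hz
    refine Submodule.smul_induction_on hz' ?_ ?_
    · intro r hr m _
      exact hgen r hr m
    · intro u w hu hw
      exact Submodule.add_mem _ hu hw
  · apply Submodule.smul_le.mpr
    intro x hx m _
    show x • m ∈ Ideal.map (algebraMap S R) I • (⊤ : Submodule R M)
    rw [← algebraMap_smul R x m]
    exact Submodule.smul_mem_smul (Ideal.mem_map_of_mem _ hx) Submodule.mem_top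

end Carrier



section Glue

lemma span_range_comp_eq_top {S X P : Type*} [CommRing S] [AddCommGroup X] [Module S X]
    [AddCommGroup P] [Module S P] {t : ℕ} (v : Fin t → X)
    (hv : Submodule.span S (Set.range v) = ⊤) (g : X →ₗ[S] P) (hg : Function.Surjective g) :
    Submodule.span S (Set.range (g ∘ v)) = ⊤ := by
  rw [Set.range_comp, ← Submodule.map_span, hv, Submodule.map_top, LinearMap.range_eq_top]
  exact hg

lemma finiteLength_restrict {S R M : Type*} [CommRing S] [CommRing R] [Algebra S R]
    [AddCommGroup M] [Module R M] [Module S M] [IsScalarTower S R M]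
    (P : Submodule R M) (h : IsFiniteLength S (M ⧸ P.restrictScalars S)) :
    IsFiniteLength R (M ⧸ P) := by
  have h' : IsFiniteLength S (M ⧸ P) := (quotRestrictScalarsEquiv M P).isFiniteLength h
  obtain ⟨hN, hA⟩ := isFiniteLength_iff_isNoetherian_isArtinian.mp h'
  exact isFiniteLength_iff_isNoetherian_isArtinian.mpr
    ⟨isNoetherian_of_tower S hN, isArtinian_of_tower S hA⟩

end Glue

open IsLocalRing Filter in
/-- for a module-finite extension `(S,n) ⊆ (R,m)` of local rings of the same
dimension `d` and a finitely generated `R`-module `M` of dimension `d`, if `M` is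
`i`-effaceable as an `R`-module for all `i < k`, then it is `i`-effaceable as an
`S`-module for all `i < k`. -/
theorem stmt_18 {S R M : Type} [CommRing S] [IsLocalRing S] [IsNoetherianRing S]
    [CommRing R] [IsLocalRing R] [Algebra S R] [Module.Finite S R]
    (hinj : Function.Injective (algebraMap S R))
    [AddCommGroup M] [Module R M] [Module S M] [IsScalarTower S R M] [Module.Finite R M]
    (d k : ℕ) (hdS : ringKrullDim S = d) (hdR : ringKrullDim R = d)
    (hdM : ringKrullDim (R ⧸ Module.annihilator R M) = d)
    (hEffR : ∀ i < k, ∀ F : ℕ → Fin d → R,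
      (∀ n, (∀ j, F n j ∈ (maximalIdeal R) ^ n) ∧
        IsFiniteLength R (M ⧸ (Ideal.span (Set.range (F n)) • ⊤ : Submodule R M))) →
      Tendsto (fun n : ℕ =>
          (mLengthNat R (koszulCohomology (F n) M i) : ℝ) /
          (mLengthNat R (R ⧸ Ideal.span (Set.range (F n))) : ℝ))
        atTop (nhds 0)) :
    ∀ i < k, ∀ F : ℕ → Fin d → S,
      (∀ n, (∀ j, F n j ∈ (maximalIdeal S) ^ n) ∧
        IsFiniteLength S (M ⧸ (Ideal.span (Set.range (F n)) • ⊤ : Submodule S M))) →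
      Tendsto (fun n : ℕ =>
          (mLengthNat S (koszulCohomology (F n) M i) : ℝ) /
          (mLengthNat S (S ⧸ Ideal.span (Set.range (F n))) : ℝ))
        atTop (nhds 0) := by
  classical
  have hint : Algebra.IsIntegral S R := Algebra.IsIntegral.of_finite S R
  have hcomap : Ideal.comap (algebraMap S R) (maximalIdeal R) = maximalIdeal S :=
    IsLocalRing.eq_maximalIdeal
      (Ideal.isMaximal_comap_of_isIntegral_of_isMaximal (maximalIdeal R))
  have hns : Ideal.map (algebraMap S R) (maximalIdeal S) ≤ maximalIdeal R :=
    Ideal.map_le_iff_le_comap.mpr (le_of_eq hcomap.symm)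
  obtain ⟨c2, v, hv⟩ := Module.Finite.exists_fin (R := S) (M := R)
  have hSn_simple : IsSimpleModule S (S ⧸ maximalIdeal S) :=
    isSimpleModule_iff_isCoatom.mpr (Ideal.isMaximal_def.mp inferInstance)
  have hSn1 : mLength S (S ⧸ maximalIdeal S) ≤ (((1 : ℕ) : ℕ∞) : WithBot ℕ∞) := by
    rw [mLength_eq_one_of_isSimpleModule hSn_simple]
    norm_num
  have hRm : mLength S (R ⧸ maximalIdeal R) ≤ (((c2 * 1 : ℕ) : ℕ∞) : WithBot ℕ∞) := by
    apply mLength_le_of_gen_annihilated (maximalIdeal S) 1 hSn1 c2 (R ⧸ maximalIdeal R)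
    · exact ⟨_, span_range_comp_eq_top v hv ((maximalIdeal R).mkQ.restrictScalars S)
        (Submodule.Quotient.mk_surjective _)⟩
    · intro x hx q
      obtain ⟨r, rfl⟩ := Submodule.Quotient.mk_surjective _ q
      rw [← Submodule.Quotient.mk_smul, Submodule.Quotient.mk_eq_zero, Algebra.smul_def]
      exact Ideal.mul_mem_right r _ (hns (Ideal.mem_map_of_mem _ hx))
  intro i hik F hF
  set G : ℕ → Fin d → R := fun n j => algebraMap S R (F n j) with hGdef
  have hJmap : ∀ n, Ideal.span (Set.range (G n)) =
      Ideal.map (algebraMap S R) (Ideal.span (Set.range (F n))) := by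
    intro n
    rw [Ideal.map_span]
    congr 1
    rw [← Set.range_comp]
    rfl
  have hGhyp : ∀ n, (∀ j, G n j ∈ (maximalIdeal R) ^ n) ∧
      IsFiniteLength R (M ⧸ (Ideal.span (Set.range (G n)) • ⊤ : Submodule R M)) := by
    intro n
    obtain ⟨hFn, hFlen⟩ := hF n
    refine ⟨?_, ?_⟩
    · intro j
      have h1 := Ideal.mem_map_of_mem (algebraMap S R) (hFn j)
      rw [Ideal.map_pow] at h1
      exact Ideal.pow_right_mono hns n h1
    · apply finiteLength_restrict (S := S)
      rw [hJmap n, map_smul_top_restrict]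
      exact hFlen
  have hEff := hEffR i hik G hGhyp
  set C : ℝ := (((c2 * 1) * c2 : ℕ) : ℝ) with hCdef
  have hg : Filter.Tendsto (fun n : ℕ => C *
      ((mLengthNat R (koszulCohomology (G n) M i) : ℝ) /
        (mLengthNat R (R ⧸ Ideal.span (Set.range (G n))) : ℝ))) atTop (nhds 0) := by
    simpa using hEff.const_mul C
  refine squeeze_zero' (Filter.Eventually.of_forall (fun n => by positivity)) ?_ hg
  rw [Filter.eventually_atTop]
  refine ⟨1, fun n hn => ?_⟩
  set a := mLengthNat S (koszulCohomology (F n) M i) with ha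
  set b := mLengthNat S (S ⧸ Ideal.span (Set.range (F n))) with hb
  set A := mLengthNat R (koszulCohomology (G n) M i) with hA
  set B := mLengthNat R (R ⧸ Ideal.span (Set.range (G n))) with hB
  show (a : ℝ) / b ≤ C * ((A : ℝ) / B)
  rcases Nat.eq_zero_or_pos b with hb0 | hbpos
  · rw [hb0]
    push_cast
    rw [div_zero]
    positivity
  rcases Nat.eq_zero_or_pos a with ha0 | hapos
  · rw [ha0]
    push_cast
    rw [zero_div]
    positivity
  have hbfin : mLength S (S ⧸ Ideal.span (Set.range (F n))) = ((b : ℕ∞) : WithBot ℕ∞) := by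
    have hne : ((mLength S (S ⧸ Ideal.span (Set.range (F n)))).unbotD 0).untopD 0 ≠ 0 :=
      Nat.pos_iff_ne_zero.mp hbpos
    exact eq_coe_of_unbot_untop_ne_zero hne
  have hafin : mLength S (koszulCohomology (F n) M i) = ((a : ℕ∞) : WithBot ℕ∞) := by
    have hne : ((mLength S (koszulCohomology (F n) M i)).unbotD 0).untopD 0 ≠ 0 :=
      Nat.pos_iff_ne_zero.mp hapos
    exact eq_coe_of_unbot_untop_ne_zero hne
  have hHeq : mLength S (koszulCohomology (F n) M i) =
      mLength S (koszulCohomology (G n) M i) := by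
    rw [hGdef]
    exact mLength_congr (koszulCohomologyEquiv (R := R) (M := M) (F n) i)
  have hRle : mLength R (koszulCohomology (G n) M i) ≤ ((a : ℕ∞) : WithBot ℕ∞) := by
    calc mLength R (koszulCohomology (G n) M i)
        ≤ mLength S (koszulCohomology (G n) M i) := mLength_restrict_le S
      _ = ((a : ℕ∞) : WithBot ℕ∞) := by rw [← hHeq, hafin]
  have hne_top : mLength R (koszulCohomology (G n) M i) ≠ ⊤ := by
    intro htop
    rw [htop] at hRle
    exact absurd hRle (by rw [← WithBot.coe_top, WithBot.coe_le_coe, top_le_iff]; exact ENat.coe_ne_top _)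
  haveI : IsNoetherian R (koszulCohomology (G n) M i) :=
    isNoetherian_iff'.mpr (wellFoundedGT_of_krullDim_ne_top hne_top)
  haveI : IsArtinian R (koszulCohomology (G n) M i) :=
    wellFoundedLT_of_krullDim_ne_top hne_top
  obtain ⟨A₀, hA₀R, hA₀S⟩ := length_restrict_le S R (c2 * 1) hRm (koszulCohomology (G n) M i)
  have hAeq : A = A₀ := unbot_untop_of_eq _ _ hA₀R
  have haA : a ≤ (c2 * 1) * A₀ := by
    have h1 : ((a : ℕ∞) : WithBot ℕ∞) ≤ (((c2 * 1) * A₀ : ℕ) : ℕ∞) := by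
      rw [← hafin, hHeq]
      exact hA₀S
    exact_mod_cast h1
  have hRJgen : ∃ w : Fin c2 → (R ⧸ Ideal.span (Set.range (G n))),
      Submodule.span S (Set.range w) = ⊤ :=
    ⟨_, span_range_comp_eq_top v hv
      ((Ideal.span (Set.range (G n))).mkQ.restrictScalars S)
      (Submodule.Quotient.mk_surjective _)⟩
  have hRJann : ∀ x ∈ Ideal.span (Set.range (F n)),
      ∀ q : (R ⧸ Ideal.span (Set.range (G n))), x • q = 0 := by
    intro x hx q
    obtain ⟨r, rfl⟩ := Submodule.Quotient.mk_surjective _ q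
    rw [← Submodule.Quotient.mk_smul, Submodule.Quotient.mk_eq_zero, Algebra.smul_def]
    apply Ideal.mul_mem_right
    rw [hJmap n]
    exact Ideal.mem_map_of_mem _ hx
  have hRJ : mLength S (R ⧸ Ideal.span (Set.range (G n))) ≤ (((c2 * b : ℕ) : ℕ∞) : WithBot ℕ∞) :=
    mLength_le_of_gen_annihilated (Ideal.span (Set.range (F n))) b (le_of_eq hbfin) c2
      (R ⧸ Ideal.span (Set.range (G n))) hRJgen hRJann
  have hBle : mLength R (R ⧸ Ideal.span (Set.range (G n))) ≤ (((c2 * b : ℕ) : ℕ∞) : WithBot ℕ∞) :=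
    (mLength_restrict_le S).trans hRJ
  have hJneTop : Ideal.span (Set.range (G n)) ≠ ⊤ := by
    intro hJt
    have hJm : Ideal.span (Set.range (G n)) ≤ maximalIdeal R := by
      rw [Ideal.span_le]
      rintro _ ⟨j, rfl⟩
      exact Ideal.pow_le_self (by omega) ((hGhyp n).1 j)
    exact (maximalIdeal.isMaximal R).ne_top (top_unique (hJt ▸ hJm))
  haveI : Nontrivial (R ⧸ Ideal.span (Set.range (G n))) := Ideal.Quotient.nontrivial_iff.mpr hJneTop
  have h1B : (1 : WithBot ℕ∞) ≤ mLength R (R ⧸ Ideal.span (Set.range (G n))) :=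
    one_le_mLength_of_nontrivial
  obtain ⟨B₀, hB₀le, hB₀⟩ := exists_nat_of_le_coe (mLength_ne_bot R _) hBle
  have hBeq : B = B₀ := unbot_untop_of_eq _ _ hB₀
  have hB₀pos : 1 ≤ B₀ := by
    rw [hB₀] at h1B
    exact_mod_cast h1B
  rw [hAeq, hBeq]
  have hbR : (0 : ℝ) < (b : ℝ) := by exact_mod_cast hbpos
  have hBR : (0 : ℝ) < (B₀ : ℝ) := by exact_mod_cast hB₀pos
  rw [hCdef, ← mul_div_assoc, div_le_div_iff₀ hbR hBR]
  calc (a : ℝ) * B₀ ≤ (((c2 * 1) * A₀ : ℕ) : ℝ) * (((c2 * b : ℕ)) : ℝ) := by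
        have := Nat.mul_le_mul haA hB₀le
        exact_mod_cast this
    _ = (((c2 * 1) * c2 : ℕ) : ℝ) * A₀ * b := by push_cast; ring
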